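/- Completeness: for all strictly positive formulas φ, ψ, if φ ⊢ ψ is derivable in RC, then 𝒯(φ) ↪* 𝒯(ψ) in the tree rewriting system TRC. -/

import Mathlib

namespace TRC

/-- Strictly positive formulas of `L⁺`. -/
inductive SPF : Type where
  | top : SPF
  | var : ℕ → SPF
  | dia : ℕ → SPF → SPF
  | and : SPF → SPF → SPF

/-- The sequent system `K⁺`. -/
inductive KPlus : SPF → SPF → Prop where
  | id (φ) : KPlus φ φ
  | topI (φ) : KPlus φ .top
  | cut {φ ψ χ} : KPlus φ ψ → KPlus ψ χ → KPlus φ χ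
  | andE₁ (φ ψ) : KPlus (.and φ ψ) φ
  | andE₂ (φ ψ) : KPlus (.and φ ψ) ψ
  | andI {φ ψ χ} : KPlus φ ψ → KPlus φ χ → KPlus φ (.and ψ χ)
  | dist {φ ψ} (α) : KPlus φ ψ → KPlus (.dia α φ) (.dia α ψ)

/-- The Reflection Calculus `RC`. -/
inductive RC : SPF → SPF → Prop where
  | id (φ) : RC φ φ
  | topI (φ) : RC φ .top
  | cut {φ ψ χ} : RC φ ψ → RC ψ χ → RC φ χ
  | andE₁ (φ ψ) : RC (.and φ ψ) φ
  | andE₂ (φ ψ) : RC (.and φ ψ) ψ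
  | andI {φ ψ χ} : RC φ ψ → RC φ χ → RC φ (.and ψ χ)
  | dist {φ ψ} (α) : RC φ ψ → RC (.dia α φ) (.dia α ψ)
  | trans (α φ) : RC (.dia α (.dia α φ)) (.dia α φ)
  | mono {α β} (φ) : β < α → RC (.dia α φ) (.dia β φ)
  | jax {α β} (φ ψ) : β < α → RC (.and (.dia α φ) (.dia β ψ)) (.dia α (.and φ (.dia β ψ)))

/-- Modal depth. -/
def SPF.md : SPF → ℕ
  | .top => 0
  | .var _ => 0
  | .dia _ φ => φ.md + 1
  | .and φ ψ => max φ.md ψ.md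

/-- Modal trees. -/
inductive MTree : Type where
  | node : List ℕ → List (ℕ × MTree) → MTree

/-- Sum of modal trees. -/
def MTree.sum : MTree → MTree → MTree
  | .node Δ₁ Γ₁, .node Δ₂ Γ₂ => .node (Δ₁ ++ Δ₂) (Γ₁ ++ Γ₂)

mutual
/-- Height of a modal tree. -/
def MTree.height : MTree → ℕ
  | .node _ Γ => heightL Γ
def heightL : List (ℕ × MTree) → ℕ
  | [] => 0
  | (_, S) :: Γ => max (S.height + 1) (heightL Γ)
end

mutual
/-- `T.IsPos k`: the (1-indexed) string `k` is a position of `T`. -/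
def MTree.IsPos : MTree → List ℕ → Prop
  | _, [] => True
  | .node _ Γ, i :: k => isPosL Γ i k
def isPosL : List (ℕ × MTree) → ℕ → List ℕ → Prop
  | [], _, _ => False
  | _ :: _, 0, _ => False
  | (_, S) :: _, 1, k => S.IsPos k
  | _ :: Γ, n+2, k => isPosL Γ (n+1) k
end

mutual
/-- Subtree of `T` at position `k` (returning a default junk value off positions). -/
def MTree.subtree : MTree → List ℕ → MTree
  | T, [] => T
  | .node Δ Γ, i :: k => subtreeL (.node Δ Γ) Γ i k
def subtreeL : MTree → List (ℕ × MTree) → ℕ → List ℕ → MTree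
  | d, [], _, _ => d
  | d, _ :: _, 0, _ => d
  | _, (_, S) :: _, 1, k => S.subtree k
  | d, _ :: Γ, n+2, k => subtreeL d Γ (n+1) k
end

mutual
/-- `T.replace S k`: replace the subtree of `T` at position `k` by `S`. -/
def MTree.replace : MTree → MTree → List ℕ → MTree
  | _, S, [] => S
  | .node Δ Γ, S, i :: k => .node Δ (replaceL Γ S i k)
def replaceL : List (ℕ × MTree) → MTree → ℕ → List ℕ → List (ℕ × MTree)
  | [], _, _, _ => []
  | Γ, _, 0, _ => Γ
  | (α, C) :: Γ, S, 1, k => (α, C.replace S k) :: Γ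
  | x :: Γ, S, n+2, k => x :: replaceL Γ S (n+1) k
end

/-- Names of the eight rewriting rules of TRC. -/
inductive Rule : Type where
  | rhoP | rhoM | sigma | piP | piM | four | lam | jay
  deriving DecidableEq

/-- One rewriting step performed at the root. -/
inductive RootStep : Rule → MTree → MTree → Prop where
  | rhoP {Δ Γ i p} (hi : 1 ≤ i) (h : Δ[i-1]? = some p) :
      RootStep .rhoP (.node Δ Γ) (.node (p :: Δ) Γ)
  | rhoM {Δ Γ i} (hi : 1 ≤ i) (h : i - 1 < Δ.length) :
      RootStep .rhoM (.node Δ Γ) (.node (Δ.eraseIdx (i-1)) Γ)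
  | sigma {Δ Γ i j x y} (hi : 1 ≤ i) (hj : 1 ≤ j) (hij : i ≠ j)
      (hx : Γ[i-1]? = some x) (hy : Γ[j-1]? = some y) :
      RootStep .sigma (.node Δ Γ) (.node Δ ((Γ.set (j-1) x).set (i-1) y))
  | piP {Δ Γ i x} (hi : 1 ≤ i) (hx : Γ[i-1]? = some x) :
      RootStep .piP (.node Δ Γ) (.node Δ (x :: Γ))
  | piM {Δ Γ i} (hi : 1 ≤ i) (h : i - 1 < Γ.length) :
      RootStep .piM (.node Δ Γ) (.node Δ (Γ.eraseIdx (i-1)))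
  | four {Δ Γ i j β Δt Γt S} (hi : 1 ≤ i) (hj : 1 ≤ j)
      (hΓ : Γ[i-1]? = some (β, MTree.node Δt Γt)) (hΓt : Γt[j-1]? = some (β, S)) :
      RootStep .four (.node Δ Γ) (.node Δ (Γ.set (i-1) (β, S)))
  | lam {Δ Γ i α β S} (hi : 1 ≤ i) (hβ : β < α) (hΓ : Γ[i-1]? = some (α, S)) :
      RootStep .lam (.node Δ Γ) (.node Δ (Γ.set (i-1) (β, S)))
  | jay {Δ Γ i j α β Δt Γt S} (hi : 1 ≤ i) (hj : 1 ≤ j) (hij : i ≠ j) (hβ : β < α)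
      (hΓi : Γ[i-1]? = some (α, MTree.node Δt Γt)) (hΓj : Γ[j-1]? = some (β, S)) :
      RootStep .jay (.node Δ Γ)
        (.node Δ ((Γ.set (i-1) (α, MTree.node Δt (Γt ++ [(β, S)]))).eraseIdx (j-1)))

/-- One step of the rule `r`, applied at some position. -/
def StepR (r : Rule) (T T' : MTree) : Prop :=
  ∃ k S, T.IsPos k ∧ RootStep r (T.subtree k) S ∧ T' = T.replace S k

/-- One step of the rewriting relation `↪`. -/
def Step (T T' : MTree) : Prop := ∃ r, StepR r T T'

/-- The rewriting relation `↪*`. -/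
def Steps : MTree → MTree → Prop := Relation.ReflTransGen Step

/-- TRC-equivalence `↔*`. -/
def TEquiv (T T' : MTree) : Prop := Steps T T' ∧ Steps T' T

/-- `T ↪^Ω S` : rewriting applying the rules of `Ω` in order, one step each. -/
inductive StepsOf : List Rule → MTree → MTree → Prop where
  | nil (T) : StepsOf [] T T
  | cons {r Ω T U S} : StepR r T U → StepsOf Ω U S → StepsOf (r :: Ω) T S

def AtomicStep (T S : MTree) : Prop := StepR .rhoP T S ∨ StepR .rhoM T S
def DecreasingStep (T S : MTree) : Prop := StepR .piM T S ∨ StepR .four T S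
def ModalStep (T S : MTree) : Prop := StepR .lam T S ∨ StepR .jay T S

/-- Finite conjunctions (empty conjunction is `⊤`). -/
def bigAnd : List SPF → SPF
  | [] => .top
  | φ :: l => .and φ (bigAnd l)

mutual
/-- The embedding `ℱ` of modal trees into formulas. -/
def MTree.toFormula : MTree → SPF
  | .node Δ Γ => .and (bigAnd (Δ.map SPF.var)) (diamL Γ)
def diamL : List (ℕ × MTree) → SPF
  | [] => .top
  | (α, S) :: Γ => .and (.dia α S.toFormula) (diamL Γ)
end

/-- The embedding `𝒯` of formulas into modal trees. -/
def SPF.toTree : SPF → MTree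
  | .top => .node [] []
  | .var p => .node [p] []
  | .dia α φ => .node [] [(α, φ.toTree)]
  | .and φ ψ => φ.toTree.sum ψ.toTree

/-- Nonempty conjunction `φ₁ ∧ (φ₂ ∧ (… ∧ φₙ))`. -/
def conjNE : SPF → List SPF → SPF
  | φ, [] => φ
  | φ, ψ :: l => .and φ (conjNE ψ l)

end TRC
namespace TRC

open MTree

lemma isPos_nil (T : MTree) : T.IsPos [] := by cases T; trivial
lemma subtree_nil (T : MTree) : T.subtree [] = T := by cases T <;> rfl
lemma replace_nil (T S : MTree) : T.replace S [] = S := by cases T <;> rfl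

lemma step_root {r : Rule} {T T' : MTree} (h : RootStep r T T') : Step T T' :=
  ⟨r, [], T', isPos_nil T, by rwa [subtree_nil], (replace_nil T T').symm⟩

lemma step_prepend_atom {Δ : List ℕ} {Γ} {p : ℕ} (hp : p ∈ Δ) :
    Step (MTree.node Δ Γ) (.node (p :: Δ) Γ) := by
  obtain ⟨n, hn, he⟩ := List.mem_iff_getElem.mp hp
  exact step_root (RootStep.rhoP (i := n+1) (by omega)
    (by simpa [List.getElem?_eq_getElem hn] using congrArg some he))

lemma step_prepend_child {Δ} {Γ : List (ℕ × MTree)} {x} (hx : x ∈ Γ) :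
    Step (MTree.node Δ Γ) (.node Δ (x :: Γ)) := by
  obtain ⟨n, hn, he⟩ := List.mem_iff_getElem.mp hx
  exact step_root (RootStep.piP (i := n+1) (by omega)
    (by simpa [List.getElem?_eq_getElem hn] using congrArg some he))

lemma steps_build_atoms {Δ Γ} (Δ' : List ℕ) (h : ∀ p ∈ Δ', p ∈ Δ) :
    Steps (MTree.node Δ Γ) (.node (Δ' ++ Δ) Γ) := by
  induction Δ' with
  | nil => exact Relation.ReflTransGen.refl
  | cons a rest ih =>
      exact (ih (fun p hp => h p (by simp [hp]))).trans
        (Relation.ReflTransGen.single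
          (step_prepend_atom (by simp [h a (by simp)])))

lemma steps_build_children {Δ Γ} (Γ' : List (ℕ × MTree)) (h : ∀ x ∈ Γ', x ∈ Γ) :
    Steps (MTree.node Δ Γ) (.node Δ (Γ' ++ Γ)) := by
  induction Γ' with
  | nil => exact Relation.ReflTransGen.refl
  | cons a rest ih =>
      exact (ih (fun p hp => h p (by simp [hp]))).trans
        (Relation.ReflTransGen.single
          (step_prepend_child (by simp [h a (by simp)])))

lemma steps_erase_atoms {Γ} (Δ' Δ : List ℕ) :
    Steps (MTree.node (Δ' ++ Δ) Γ) (.node Δ' Γ) := by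
  induction Δ with
  | nil => simp only [List.append_nil]; exact Relation.ReflTransGen.refl
  | cons d rest ih =>
      refine Relation.ReflTransGen.head
        (step_root (RootStep.rhoM (i := Δ'.length + 1) (by omega) (by simp))) ?_
      have he : (Δ' ++ d :: rest).eraseIdx (Δ'.length + 1 - 1) = Δ' ++ rest := by
        rw [show Δ'.length + 1 - 1 = Δ'.length from rfl,
          List.eraseIdx_append_of_length_le (le_refl _)]
        simp
      rw [he]; exact ih

lemma steps_erase_children {Δ} (Γ' Γ : List (ℕ × MTree)) :
    Steps (MTree.node Δ (Γ' ++ Γ)) (.node Δ Γ') := by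
  induction Γ with
  | nil => simp only [List.append_nil]; exact Relation.ReflTransGen.refl
  | cons d rest ih =>
      refine Relation.ReflTransGen.head
        (step_root (RootStep.piM (i := Γ'.length + 1) (by omega) (by simp))) ?_
      have he : (Γ' ++ d :: rest).eraseIdx (Γ'.length + 1 - 1) = Γ' ++ rest := by
        rw [show Γ'.length + 1 - 1 = Γ'.length from rfl,
          List.eraseIdx_append_of_length_le (le_refl _)]
        simp
      rw [he]; exact ih

lemma rearrange {Δ Γ Δ' Γ'} (hΔ : ∀ p ∈ Δ', p ∈ Δ) (hΓ : ∀ x ∈ Γ', x ∈ Γ) :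
    Steps (MTree.node Δ Γ) (.node Δ' Γ') :=
  (((steps_build_atoms Δ' hΔ).trans (steps_build_children Γ' hΓ)).trans
    (steps_erase_atoms Δ' Δ)).trans (steps_erase_children Γ' Γ)

end TRC
namespace TRC
open MTree

lemma not_isPosL_zero (Γ : List (ℕ × MTree)) (k) : ¬ isPosL Γ 0 k := by
  cases Γ with
  | nil => exact id
  | cons x Γ => exact id

lemma isPosL_one_le {Γ : List (ℕ × MTree)} {i k} (h : isPosL Γ i k) : 1 ≤ i := by
  cases i with
  | zero => exact absurd h (not_isPosL_zero Γ k)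
  | succ n => omega

lemma isPosL_append_left {Γ : List (ℕ × MTree)} {i k} (Γ₂) (h : isPosL Γ i k) :
    isPosL (Γ ++ Γ₂) i k := by
  induction Γ generalizing i with
  | nil => exact absurd h id
  | cons x Γ ih =>
      match i with
      | 0 => exact absurd h id
      | 1 => cases x; exact h
      | n+2 => exact ih h

lemma subtreeL_append_left {Γ : List (ℕ × MTree)} {i k} (d d' Γ₂) (h : isPosL Γ i k) :
    subtreeL d (Γ ++ Γ₂) i k = subtreeL d' Γ i k := by
  induction Γ generalizing i with
  | nil => exact absurd h id
  | cons x Γ ih =>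
      match i with
      | 0 => exact absurd h id
      | 1 => cases x; rfl
      | n+2 => exact ih h

lemma replaceL_append_left {Γ : List (ℕ × MTree)} {i k} (S Γ₂) (h : isPosL Γ i k) :
    replaceL (Γ ++ Γ₂) S i k = replaceL Γ S i k ++ Γ₂ := by
  induction Γ generalizing i with
  | nil => exact absurd h id
  | cons x Γ ih =>
      match i with
      | 0 => exact absurd h id
      | 1 => cases x; rfl
      | n+2 => exact congrArg (x :: ·) (ih h)

lemma isPosL_append_right {Γ : List (ℕ × MTree)} {i k} (Γ₁ : List (ℕ × MTree))
    (h : isPosL Γ i k) : isPosL (Γ₁ ++ Γ) (Γ₁.length + i) k := by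
  induction Γ₁ with
  | nil => simpa using h
  | cons x Γ₁ ih =>
      obtain ⟨m, rfl⟩ : ∃ m, i = m + 1 := ⟨i - 1, by have := isPosL_one_le h; omega⟩
      have e : (x :: Γ₁).length + (m + 1) = Γ₁.length + m + 2 := by
        simp; omega
      rw [e]
      show isPosL (x :: (Γ₁ ++ Γ)) (Γ₁.length + m + 2) k
      show isPosL (Γ₁ ++ Γ) (Γ₁.length + m + 1) k
      exact ih

lemma subtreeL_append_right {Γ : List (ℕ × MTree)} {i k} (d d' : MTree)
    (Γ₁ : List (ℕ × MTree)) (h : isPosL Γ i k) :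
    subtreeL d (Γ₁ ++ Γ) (Γ₁.length + i) k = subtreeL d' Γ i k := by
  induction Γ₁ with
  | nil =>
      simp only [List.nil_append, List.length_nil, Nat.zero_add]
      induction Γ generalizing i with
      | nil => exact absurd h id
      | cons x Γ ih =>
          match i with
          | 0 => exact absurd h id
          | 1 => cases x; rfl
          | n+2 => exact ih h
  | cons x Γ₁ ih =>
      obtain ⟨m, rfl⟩ : ∃ m, i = m + 1 := ⟨i - 1, by have := isPosL_one_le h; omega⟩
      have e : (x :: Γ₁).length + (m + 1) = Γ₁.length + m + 2 := by
        simp; omega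
      rw [e]
      show subtreeL d (x :: (Γ₁ ++ Γ)) (Γ₁.length + m + 2) k = _
      show subtreeL d (Γ₁ ++ Γ) (Γ₁.length + m + 1) k = _
      exact ih

lemma replaceL_append_right {Γ : List (ℕ × MTree)} {i k} (S : MTree)
    (Γ₁ : List (ℕ × MTree)) (h : isPosL Γ i k) :
    replaceL (Γ₁ ++ Γ) S (Γ₁.length + i) k = Γ₁ ++ replaceL Γ S i k := by
  induction Γ₁ with
  | nil => simp
  | cons x Γ₁ ih =>
      obtain ⟨m, rfl⟩ : ∃ m, i = m + 1 := ⟨i - 1, by have := isPosL_one_le h; omega⟩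
      have e : (x :: Γ₁).length + (m + 1) = Γ₁.length + m + 2 := by
        simp; omega
      rw [e]
      show replaceL (x :: (Γ₁ ++ Γ)) S (Γ₁.length + m + 2) k = _
      show x :: replaceL (Γ₁ ++ Γ) S (Γ₁.length + m + 1) k = _
      exact congrArg (x :: ·) ih

end TRC
namespace TRC
open MTree

lemma mem_of_getElem? {α : Type*} {l : List α} {n : ℕ} {a : α} (h : l[n]? = some a) :
    a ∈ l := by
  obtain ⟨hl, he⟩ := List.getElem?_eq_some_iff.mp h
  exact he ▸ List.getElem_mem hl

lemma rootStep_sum_left {r : Rule} {Δ Γ T'} (h : RootStep r (MTree.node Δ Γ) T')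
    (Δ₂ : List ℕ) (Γ₂ : List (ℕ × MTree)) :
    RootStep r (MTree.node (Δ ++ Δ₂) (Γ ++ Γ₂)) (T'.sum (.node Δ₂ Γ₂)) := by
  cases h with
  | @rhoP _ _ i p hi h =>
      have hlt : i - 1 < Δ.length := (List.getElem?_eq_some_iff.mp h).1
      have h' : (Δ ++ Δ₂)[i-1]? = some p := by rw [List.getElem?_append, if_pos hlt]; exact h
      simpa [MTree.sum] using RootStep.rhoP (Γ := Γ ++ Γ₂) hi h'
  | @rhoM _ _ i hi h =>
      have := RootStep.rhoM (Γ := Γ ++ Γ₂) (Δ := Δ ++ Δ₂) (i := i) hi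
        (by simp; omega)
      simpa [MTree.sum, List.eraseIdx_append_of_lt_length h] using this
  | @sigma _ _ i j x y hi hj hij hx hy =>
      have hlt : i - 1 < Γ.length := (List.getElem?_eq_some_iff.mp hx).1
      have hlt' : j - 1 < Γ.length := (List.getElem?_eq_some_iff.mp hy).1
      have := RootStep.sigma (Δ := Δ ++ Δ₂) (Γ := Γ ++ Γ₂) hi hj hij
        (x := x) (y := y) (by rw [List.getElem?_append, if_pos hlt]; exact hx)
        (by rw [List.getElem?_append, if_pos hlt']; exact hy)
      simpa [MTree.sum, List.set_append, hlt, hlt', List.length_set] using this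
  | @piP _ _ i x hi hx =>
      have hlt : i - 1 < Γ.length := (List.getElem?_eq_some_iff.mp hx).1
      have h' : (Γ ++ Γ₂)[i-1]? = some x := by rw [List.getElem?_append, if_pos hlt]; exact hx
      simpa [MTree.sum] using RootStep.piP (Δ := Δ ++ Δ₂) hi h'
  | @piM _ _ i hi h =>
      have := RootStep.piM (Γ := Γ ++ Γ₂) (Δ := Δ ++ Δ₂) (i := i) hi (by simp; omega)
      simpa [MTree.sum, List.eraseIdx_append_of_lt_length h] using this
  | @four _ _ i j β Δt Γt S hi hj hΓ hΓt =>
      have hlt : i - 1 < Γ.length := (List.getElem?_eq_some_iff.mp hΓ).1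
      have := RootStep.four (Δ := Δ ++ Δ₂) (Γ := Γ ++ Γ₂) hi hj
        (by rw [List.getElem?_append, if_pos hlt]; exact hΓ) hΓt
      simpa [MTree.sum, List.set_append, hlt] using this
  | @lam _ _ i α β S hi hβ hΓ =>
      have hlt : i - 1 < Γ.length := (List.getElem?_eq_some_iff.mp hΓ).1
      have := RootStep.lam (Δ := Δ ++ Δ₂) (Γ := Γ ++ Γ₂) (β := β) hi hβ
        (by rw [List.getElem?_append, if_pos hlt]; exact hΓ)
      simpa [MTree.sum, List.set_append, hlt] using this
  | @jay _ _ i j α β Δt Γt S hi hj hij hβ hΓi hΓj =>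
      have hlt : i - 1 < Γ.length := (List.getElem?_eq_some_iff.mp hΓi).1
      have hlt' : j - 1 < Γ.length := (List.getElem?_eq_some_iff.mp hΓj).1
      have := RootStep.jay (Δ := Δ ++ Δ₂) (Γ := Γ ++ Γ₂) hi hj hij hβ
        (by rw [List.getElem?_append, if_pos hlt]; exact hΓi)
        (by rw [List.getElem?_append, if_pos hlt']; exact hΓj)
      have e1 : (Γ ++ Γ₂).set (i-1) (α, MTree.node Δt (Γt ++ [(β, S)]))
          = Γ.set (i-1) (α, MTree.node Δt (Γt ++ [(β, S)])) ++ Γ₂ := by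
        simp [List.set_append, hlt]
      have e2 : (Γ.set (i-1) (α, MTree.node Δt (Γt ++ [(β, S)])) ++ Γ₂).eraseIdx (j-1)
          = (Γ.set (i-1) (α, MTree.node Δt (Γt ++ [(β, S)]))).eraseIdx (j-1) ++ Γ₂ :=
        List.eraseIdx_append_of_lt_length (by simpa using hlt') _
      rw [e1, e2] at this
      simpa [MTree.sum] using this

lemma roots_sum_right {r : Rule} {Δ Γ T'} (h : RootStep r (MTree.node Δ Γ) T')
    (Δ₂ : List ℕ) (Γ₂ : List (ℕ × MTree)) :
    Steps (MTree.node (Δ₂ ++ Δ) (Γ₂ ++ Γ)) ((MTree.node Δ₂ Γ₂).sum T') := by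
  cases h with
  | @rhoP _ _ i p hi h =>
      refine rearrange (fun q hq => ?_) (fun x hx => hx)
      rcases List.mem_append.mp hq with h1 | h1
      · exact List.mem_append_left _ h1
      · rcases List.mem_cons.mp h1 with rfl | h2
        · exact List.mem_append_right _ (mem_of_getElem? h)
        · exact List.mem_append_right _ h2
  | @piP _ _ i x hi hx =>
      refine rearrange (fun q hq => hq) (fun y hy => ?_)
      rcases List.mem_append.mp hy with h1 | h1
      · exact List.mem_append_left _ h1
      · rcases List.mem_cons.mp h1 with rfl | h2
        · exact List.mem_append_right _ (mem_of_getElem? hx)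
        · exact List.mem_append_right _ h2
  | @rhoM _ _ i hi h =>
      refine Relation.ReflTransGen.single (step_root (r := .rhoM) ?_)
      have st := RootStep.rhoM (Δ := Δ₂ ++ Δ) (Γ := Γ₂ ++ Γ)
        (i := Δ₂.length + i) (by omega) (by simp; omega)
      have e : Δ₂.length + i - 1 = Δ₂.length + (i - 1) := by omega
      rw [e] at st
      simpa [MTree.sum, List.eraseIdx_append_of_length_le] using st
  | @sigma _ _ i j x y hi hj hij hx hy =>
      refine Relation.ReflTransGen.single (step_root (r := .sigma) ?_)
      have ei : Γ₂.length + i - 1 = Γ₂.length + (i - 1) := by omega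
      have ej : Γ₂.length + j - 1 = Γ₂.length + (j - 1) := by omega
      have st := RootStep.sigma (Δ := Δ₂ ++ Δ) (Γ := Γ₂ ++ Γ)
        (i := Γ₂.length + i) (j := Γ₂.length + j) (x := x) (y := y)
        (by omega) (by omega) (by omega)
        (by rw [ei]; simpa [List.getElem?_append_right] using hx)
        (by rw [ej]; simpa [List.getElem?_append_right] using hy)
      rw [ei, ej] at st
      simpa [MTree.sum, List.set_append] using st
  | @piM _ _ i hi h =>
      refine Relation.ReflTransGen.single (step_root (r := .piM) ?_)
      have st := RootStep.piM (Δ := Δ₂ ++ Δ) (Γ := Γ₂ ++ Γ)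
        (i := Γ₂.length + i) (by omega) (by simp; omega)
      have e : Γ₂.length + i - 1 = Γ₂.length + (i - 1) := by omega
      rw [e] at st
      simpa [MTree.sum, List.eraseIdx_append_of_length_le] using st
  | @four _ _ i j β Δt Γt S hi hj hΓ hΓt =>
      refine Relation.ReflTransGen.single (step_root (r := .four) ?_)
      have e : Γ₂.length + i - 1 = Γ₂.length + (i - 1) := by omega
      have st := RootStep.four (Δ := Δ₂ ++ Δ) (Γ := Γ₂ ++ Γ)
        (i := Γ₂.length + i) (j := j) (by omega) hj
        (by rw [e]; simpa [List.getElem?_append_right] using hΓ) hΓt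
      rw [e] at st
      simpa [MTree.sum, List.set_append] using st
  | @lam _ _ i α β S hi hβ hΓ =>
      refine Relation.ReflTransGen.single (step_root (r := .lam) ?_)
      have e : Γ₂.length + i - 1 = Γ₂.length + (i - 1) := by omega
      have st := RootStep.lam (Δ := Δ₂ ++ Δ) (Γ := Γ₂ ++ Γ)
        (i := Γ₂.length + i) (β := β) (by omega) hβ
        (by rw [e]; simpa [List.getElem?_append_right] using hΓ)
      rw [e] at st
      simpa [MTree.sum, List.set_append] using st
  | @jay _ _ i j α β Δt Γt S hi hj hij hβ hΓi hΓj =>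
      refine Relation.ReflTransGen.single (step_root (r := .jay) ?_)
      have ei : Γ₂.length + i - 1 = Γ₂.length + (i - 1) := by omega
      have ej : Γ₂.length + j - 1 = Γ₂.length + (j - 1) := by omega
      have st := RootStep.jay (Δ := Δ₂ ++ Δ) (Γ := Γ₂ ++ Γ)
        (i := Γ₂.length + i) (j := Γ₂.length + j) (by omega) (by omega) (by omega) hβ
        (by rw [ei]; simpa [List.getElem?_append_right] using hΓi)
        (by rw [ej]; simpa [List.getElem?_append_right] using hΓj)
      rw [ei, ej] at st
      have e1 : (Γ₂ ++ Γ).set (Γ₂.length + (i-1)) (α, MTree.node Δt (Γt ++ [(β, S)]))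
          = Γ₂ ++ Γ.set (i-1) (α, MTree.node Δt (Γt ++ [(β, S)])) := by
        simp [List.set_append]
      rw [e1] at st
      have e2 : (Γ₂ ++ Γ.set (i-1) (α, MTree.node Δt (Γt ++ [(β, S)]))).eraseIdx
            (Γ₂.length + (j-1))
          = Γ₂ ++ (Γ.set (i-1) (α, MTree.node Δt (Γt ++ [(β, S)]))).eraseIdx (j-1) := by
        simp [List.eraseIdx_append_of_length_le]
      rw [e2] at st
      simpa [MTree.sum] using st

end TRC
namespace TRC
open MTree

lemma step_sum_left {T T' U : MTree} (h : Step T T') : Step (T.sum U) (T'.sum U) := by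
  obtain ⟨r, k, S, hpos, hroot, rfl⟩ := h
  cases T with | node Δ Γ =>
  cases U with | node Δ₂ Γ₂ =>
  cases k with
  | nil =>
      rw [subtree_nil] at hroot
      rw [replace_nil]
      refine ⟨r, [], S.sum (.node Δ₂ Γ₂), isPos_nil _, ?_, (replace_nil _ _).symm⟩
      rw [subtree_nil]
      exact rootStep_sum_left hroot Δ₂ Γ₂
  | cons i k =>
      have hpos' : isPosL Γ i k := hpos
      refine ⟨r, i :: k, S, ?_, ?_, ?_⟩
      · exact isPosL_append_left Γ₂ hpos'
      · have e : (MTree.node (Δ ++ Δ₂) (Γ ++ Γ₂)).subtree (i :: k)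
            = (MTree.node Δ Γ).subtree (i :: k) :=
          subtreeL_append_left _ _ Γ₂ hpos'
        show RootStep r ((MTree.node (Δ ++ Δ₂) (Γ ++ Γ₂)).subtree (i :: k)) S
        rw [e]; exact hroot
      · show MTree.node (Δ ++ Δ₂) (replaceL Γ S i k ++ Γ₂)
            = MTree.node (Δ ++ Δ₂) (replaceL (Γ ++ Γ₂) S i k)
        rw [replaceL_append_left S Γ₂ hpos']

lemma step_sum_right {T T' U : MTree} (h : Step T T') : Steps (U.sum T) (U.sum T') := by
  obtain ⟨r, k, S, hpos, hroot, rfl⟩ := h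
  cases T with | node Δ Γ =>
  cases U with | node Δ₂ Γ₂ =>
  cases k with
  | nil =>
      rw [subtree_nil] at hroot
      rw [replace_nil]
      exact roots_sum_right hroot Δ₂ Γ₂
  | cons i k =>
      have hpos' : isPosL Γ i k := hpos
      refine Relation.ReflTransGen.single ⟨r, (Γ₂.length + i) :: k, S, ?_, ?_, ?_⟩
      · exact isPosL_append_right Γ₂ hpos'
      · have e : (MTree.node (Δ₂ ++ Δ) (Γ₂ ++ Γ)).subtree ((Γ₂.length + i) :: k)
            = (MTree.node Δ Γ).subtree (i :: k) :=
          subtreeL_append_right _ _ Γ₂ hpos'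
        show RootStep r ((MTree.node (Δ₂ ++ Δ) (Γ₂ ++ Γ)).subtree ((Γ₂.length + i) :: k)) S
        rw [e]; exact hroot
      · show MTree.node (Δ₂ ++ Δ) (Γ₂ ++ replaceL Γ S i k)
            = MTree.node (Δ₂ ++ Δ) (replaceL (Γ₂ ++ Γ) S (Γ₂.length + i) k)
        rw [replaceL_append_right S Γ₂ hpos']

lemma steps_sum_left {T T' : MTree} (U : MTree) (h : Steps T T') :
    Steps (T.sum U) (T'.sum U) :=
  Relation.ReflTransGen.lift (fun X => MTree.sum X U) (fun _ _ hab => step_sum_left hab) _ _ h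

lemma steps_sum_right {T T' : MTree} (U : MTree) (h : Steps T T') :
    Steps (U.sum T) (U.sum T') := by
  induction h with
  | refl => exact Relation.ReflTransGen.refl
  | tail _ hbc ih => exact ih.trans (step_sum_right hbc)

lemma step_dia {α : ℕ} {T T' : MTree} (h : Step T T') :
    Step (MTree.node [] [(α, T)]) (.node [] [(α, T')]) := by
  obtain ⟨r, k, S, hpos, hroot, rfl⟩ := h
  exact ⟨r, 1 :: k, S, hpos, hroot, rfl⟩

lemma steps_dia (α : ℕ) {T T' : MTree} (h : Steps T T') :
    Steps (MTree.node [] [(α, T)]) (.node [] [(α, T')]) :=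
  Relation.ReflTransGen.lift (fun X => MTree.node [] [(α, X)])
    (fun _ _ hab => step_dia hab) _ _ h

lemma steps_to_empty (T : MTree) : Steps T (.node [] []) := by
  cases T with | node Δ Γ => exact rearrange (by simp) (by simp)

lemma steps_sum_fst (T U : MTree) : Steps (T.sum U) T := by
  cases T with | node Δ Γ =>
  cases U with | node Δ₂ Γ₂ =>
  exact rearrange (fun p hp => List.mem_append_left _ hp)
    (fun x hx => List.mem_append_left _ hx)

lemma steps_sum_snd (T U : MTree) : Steps (T.sum U) U := by
  cases T with | node Δ Γ =>
  cases U with | node Δ₂ Γ₂ =>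
  exact rearrange (fun p hp => List.mem_append_right _ hp)
    (fun x hx => List.mem_append_right _ hx)

lemma steps_dup (T : MTree) : Steps T (T.sum T) := by
  cases T with | node Δ Γ =>
  exact rearrange (fun p hp => (List.mem_append.mp hp).elim id id)
    (fun x hx => (List.mem_append.mp hx).elim id id)

lemma step_jax {α β : ℕ} (hβ : β < α) (A B : MTree) :
    Step (MTree.node [] [(α, A), (β, B)])
      (.node [] [(α, A.sum (.node [] [(β, B)]))]) := by
  cases A with | node Δt Γt =>
  refine step_root (r := .jay) ?_
  have st := RootStep.jay (Δ := []) (Γ := [(α, .node Δt Γt), (β, B)])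
    (i := 1) (j := 2) (α := α) (β := β) (Δt := Δt) (Γt := Γt) (S := B)
    (by omega) (by omega) (by omega) hβ rfl rfl
  simpa [MTree.sum] using st

end TRC
/-- Completeness: if `φ ⊢_{RC} ψ` then `𝒯(φ) ↪* 𝒯(ψ)`. -/
theorem completeness (φ ψ : TRC.SPF) (h : TRC.RC φ ψ) :
    TRC.Steps φ.toTree ψ.toTree := by
  induction h with
  | id φ => exact Relation.ReflTransGen.refl
  | topI φ => exact TRC.steps_to_empty _
  | cut _ _ ih1 ih2 => exact ih1.trans ih2
  | andE₁ φ ψ => exact TRC.steps_sum_fst _ _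
  | andE₂ φ ψ => exact TRC.steps_sum_snd _ _
  | andI _ _ ih1 ih2 =>
      exact (TRC.steps_dup _).trans
        ((TRC.steps_sum_left _ ih1).trans (TRC.steps_sum_right _ ih2))
  | dist α _ ih => exact TRC.steps_dia α ih
  | trans α φ =>
      refine Relation.ReflTransGen.single (TRC.step_root (r := .four) ?_)
      have st := TRC.RootStep.four (Δ := []) (Γ := [(α, .node [] [(α, φ.toTree)])])
        (i := 1) (j := 1) (β := α) (Δt := []) (Γt := [(α, φ.toTree)]) (S := φ.toTree)
        (by omega) (by omega) rfl rfl
      simpa [TRC.SPF.toTree] using st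
  | @mono α β φ hβ =>
      refine Relation.ReflTransGen.single (TRC.step_root (r := .lam) ?_)
      have st := TRC.RootStep.lam (Δ := []) (Γ := [(α, φ.toTree)])
        (i := 1) (β := β) (by omega) hβ rfl
      simpa [TRC.SPF.toTree] using st
  | @jax α β φ ψ h => exact Relation.ReflTransGen.single (TRC.step_jax h _ _)
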